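/- Let f : ℝⁿ → ℝ be C^1 on a neighbourhood of x̄ with x̄ a local minimum of f, let Σ be the set of critical points of f near x̄, and suppose there exist positive constants c, δ, w̄ with ‖∇f(x)‖ ≥ c·dist(x, Σ)^{r−1} for all x in {x : |f(x)−f(x̄)| ≤ w̄·dist(x,Σ)^r} ∩ B_δ(x̄), where r ≥ 2. Assume moreover that ∇f is L-Lipschitz near x̄ for some L > 0. Then for every ε with 0 < ε < 2^{−r}L^{−r}·min{c, w̄}, and every function h : ℝⁿ → ℝ satisfying |h(x) − h(x̄)| ≤ ε·‖∇f(x)‖^r for x near x̄, the point x̄ is a local minimum of f + h. -/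

import Mathlib

open Filter Metric Set Topology

set_option maxHeartbeats 1000000

/-- Stability under perturbations measured by the gradient: if the Łojasiewicz inequality
holds on a horn-neighbourhood relative to the critical set `S` of `f`, `∇f` is `L`-Lipschitz
near `xbar`, and `|h(x) - h(xbar)| ≤ ε·‖∇f(x)‖^r` near `xbar` with
`ε < min{c, w}/(2^r L^r)`, then `xbar` is a local minimum of `f + h`. -/
theorem stmt_18 {n : ℕ} (r : ℕ) (hr : 2 ≤ r) (f : EuclideanSpace ℝ (Fin n) → ℝ)
    (xbar : EuclideanSpace ℝ (Fin n)) (V S : Set (EuclideanSpace ℝ (Fin n)))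
    (hV : IsOpen V) (hx : xbar ∈ V) (hf : ContDiffOn ℝ 1 f V)
    (hmin : IsLocalMin f xbar)
    (hS : S = {x ∈ V | gradient f x = 0})
    (c δ w : ℝ) (hc : 0 < c) (hδ : 0 < δ) (hw : 0 < w)
    (hgrad : ∀ x ∈ Metric.closedBall xbar δ,
      |f x - f xbar| ≤ w * Metric.infDist x S ^ r →
      c * Metric.infDist x S ^ (r - 1) ≤ ‖gradient f x‖)
    (L : ℝ) (hL : 0 < L)
    (hLip : ∃ s ∈ 𝓝 xbar, LipschitzOnWith (Real.toNNReal L) (gradient f) s) :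
    ∀ ε : ℝ, 0 < ε → ε < min c w / (2 ^ r * L ^ r) →
      ∀ h : EuclideanSpace ℝ (Fin n) → ℝ,
        (∀ᶠ x in 𝓝 xbar, |h x - h xbar| ≤ ε * ‖gradient f x‖ ^ r) →
        IsLocalMin (f + h) xbar := by
  intro ε hε hεlt h hh
  have hr1 : 1 ≤ r := le_trans (by norm_num) hr
  have hx_crit : gradient f xbar = 0 := by
    rw [gradient, hmin.fderiv_eq_zero, map_zero]
  have hxS : xbar ∈ S := by rw [hS]; exact ⟨hx, hx_crit⟩
  have hpow : (0:ℝ) < 2 ^ r * L ^ r := by positivity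
  have hkey : ε * (2 ^ r * L ^ r) < min c w := (lt_div_iff₀ hpow).mp hεlt
  obtain ⟨s, hs_mem, hs_lip⟩ := hLip
  have hLnn : ((Real.toNNReal L) : ℝ) = L := Real.coe_toNNReal L hL.le
  -- pick a good radius ρ
  have hU : (V ∩ s ∩ {x | f xbar ≤ f x} ∩ {x | |h x - h xbar| ≤ ε * ‖gradient f x‖ ^ r}
      ∩ Metric.closedBall xbar δ) ∈ 𝓝 xbar := by
    refine Filter.inter_mem (Filter.inter_mem (Filter.inter_mem (Filter.inter_mem
      (hV.mem_nhds hx) hs_mem) hmin) hh) (Metric.closedBall_mem_nhds _ hδ)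
  obtain ⟨ρ0, hρ0, hball⟩ := Metric.nhds_basis_closedBall.mem_iff.mp hU
  set ρ : ℝ := ρ0 / 2 with hρdef
  have hρ : 0 < ρ := by positivity
  have hsub : Metric.closedBall xbar (2 * ρ) ⊆ V ∩ s ∩ {x | f xbar ≤ f x}
      ∩ {x | |h x - h xbar| ≤ ε * ‖gradient f x‖ ^ r} ∩ Metric.closedBall xbar δ := by
    have h2ρ : (2:ℝ) * ρ = ρ0 := by rw [hρdef]; ring
    rw [h2ρ]; exact hball
  -- gradient bound near xbar: ‖∇f x‖ ≤ L · dist(x, S)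
  have hgb : ∀ x ∈ Metric.closedBall xbar ρ, ‖gradient f x‖ ≤ L * Metric.infDist x S := by
    intro x hxb
    have hxs : x ∈ s := by
      have hx2 : x ∈ Metric.closedBall xbar (2 * ρ) :=
        Metric.closedBall_subset_closedBall (by linarith) hxb
      exact ((hsub hx2).1.1.1).2
    have hclaim : ∀ y ∈ S, ‖gradient f x‖ ≤ L * dist x y := by
      intro y hyS
      rcases le_or_gt (dist x xbar) (dist x y) with hle | hlt
      · have hxbars : xbar ∈ s := by
          have hxb2 : xbar ∈ Metric.closedBall xbar (2 * ρ) :=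
            Metric.mem_closedBall_self (by linarith)
          exact ((hsub hxb2).1.1.1).2
        have hd := hs_lip.dist_le_mul x hxs xbar hxbars
        rw [hx_crit, dist_zero_right, hLnn] at hd
        calc ‖gradient f x‖ ≤ L * dist x xbar := hd
          _ ≤ L * dist x y := by nlinarith
      · have hys : y ∈ s := by
          have hyball : y ∈ Metric.closedBall xbar (2 * ρ) := by
            have h1 : dist x xbar ≤ ρ := Metric.mem_closedBall.mp hxb
            have h2 : dist y xbar ≤ dist y x + dist x xbar := dist_triangle _ _ _
            rw [dist_comm y x] at h2
            exact Metric.mem_closedBall.mpr (by linarith)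
          exact ((hsub hyball).1.1.1).2
        have hy0 : gradient f y = 0 := by rw [hS] at hyS; exact hyS.2
        have hd := hs_lip.dist_le_mul x hxs y hys
        rw [hy0, dist_zero_right, hLnn] at hd
        exact hd
    rcases le_or_gt ‖gradient f x‖ (L * Metric.infDist x S) with hok | hbad
    · exact hok
    exfalso
    have h1 : Metric.infDist x S < ‖gradient f x‖ / L := by
      rw [lt_div_iff₀ hL]; nlinarith
    obtain ⟨y, hyS, hy⟩ := (Metric.infDist_lt_iff ⟨xbar, hxS⟩).mp h1
    have h2 := hclaim y hyS
    rw [lt_div_iff₀ hL] at hy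
    nlinarith
  -- main argument
  have hballρ : Metric.closedBall xbar ρ ∈ 𝓝 xbar := Metric.closedBall_mem_nhds _ hρ
  filter_upwards [hballρ] with x₀ hx₀
  by_contra hcon
  push_neg at hcon
  simp only [Pi.add_apply] at hcon
  set d : ℝ := Metric.infDist x₀ S with hd_def
  have hd0 : 0 ≤ d := Metric.infDist_nonneg
  have hdρ : d ≤ ρ := le_trans (Metric.infDist_le_dist_of_mem hxS) (Metric.mem_closedBall.mp hx₀)
  have hx₀2 : x₀ ∈ Metric.closedBall xbar (2 * ρ) :=
    Metric.closedBall_subset_closedBall (by linarith) hx₀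
  have hhx₀ : |h x₀ - h xbar| ≤ ε * ‖gradient f x₀‖ ^ r := (hsub hx₀2).1.2
  have hfx₀ : f xbar ≤ f x₀ := (hsub hx₀2).1.1.2
  have hgx₀ : ‖gradient f x₀‖ ≤ L * d := hgb x₀ hx₀
  have hbnd : ε * ‖gradient f x₀‖ ^ r ≤ ε * (L ^ r * d ^ r) := by
    have h1 : ‖gradient f x₀‖ ^ r ≤ (L * d) ^ r :=
      pow_le_pow_left₀ (norm_nonneg _) hgx₀ r
    rw [mul_pow] at h1
    exact mul_le_mul_of_nonneg_left h1 hε.le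
  have hfup : f x₀ < f xbar + ε * (L ^ r * d ^ r) := by
    have h2 : h xbar - h x₀ ≤ |h x₀ - h xbar| := by
      rw [abs_sub_comm]; exact le_abs_self _
    linarith
  have hdpos : 0 < d := by
    rcases hd0.lt_or_eq with h1 | h1
    · exact h1
    · exfalso
      rw [← h1] at hfup
      have hz : (0:ℝ) ^ r = 0 := zero_pow (by omega)
      rw [hz] at hfup
      simp at hfup
      linarith
  -- penalization: minimize f(z) + σ·dist(z, x₀) over the compact ball K
  set σ : ℝ := 2 * ε * L ^ r * d ^ (r - 1) with hσ_def
  have hσpos : 0 < σ := by positivity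
  have hdr : d ^ r = d ^ (r - 1) * d := by
    rw [← pow_succ]
    congr 1
    omega
  set K := Metric.closedBall xbar (2 * ρ) with hK_def
  have hKc : IsCompact K := isCompact_closedBall _ _
  have hKne : K.Nonempty := ⟨xbar, Metric.mem_closedBall_self (by linarith)⟩
  have hKV : K ⊆ V := fun z hz => ((hsub hz).1.1.1).1
  have hφcont : ContinuousOn (fun z => f z + σ * dist z x₀) K :=
    (hf.continuousOn.mono hKV).add
      ((continuous_const.mul (continuous_id.dist continuous_const)).continuousOn)
  obtain ⟨y, hyK, hymin⟩ := hKc.exists_isMinOn hKne hφcont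
  have hφy : f y + σ * dist y x₀ ≤ f x₀ := by
    have h1 := hymin hx₀2
    simpa using h1
  have hfy : f xbar ≤ f y := (hsub hyK).1.1.2
  have hdistnn : 0 ≤ σ * dist y x₀ := mul_nonneg hσpos.le dist_nonneg
  have hyd : dist y x₀ < d / 2 := by
    have h3 : σ * (d / 2) = ε * (L ^ r * d ^ r) := by
      rw [hσ_def, hdr]; ring
    have h4 : σ * dist y x₀ < σ * (d / 2) := by linarith
    exact lt_of_mul_lt_mul_left h4 hσpos.le
  have hyρ : dist y xbar < 2 * ρ := by
    have h1 : dist y xbar ≤ dist y x₀ + dist x₀ xbar := dist_triangle _ _ _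
    have h2 : dist x₀ xbar ≤ ρ := Metric.mem_closedBall.mp hx₀
    linarith
  have hyV : y ∈ V := hKV hyK
  -- gradient bound at y from minimality
  have hgy : ‖gradient f y‖ ≤ σ := by
    by_cases hg : gradient f y = 0
    · rw [hg]; simpa using hσpos.le
    · set g := gradient f y with hg_def
      set v : EuclideanSpace ℝ (Fin n) := -(‖g‖⁻¹ • g) with hv_def
      have hgn : 0 < ‖g‖ := norm_pos_iff.mpr hg
      have hvnorm : ‖v‖ = 1 := by
        rw [hv_def, norm_neg, norm_smul, norm_inv, norm_norm]
        field_simp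
      have hdiff : DifferentiableAt ℝ f y :=
        (hf.contDiffAt (hV.mem_nhds hyV)).differentiableAt one_ne_zero
      have hline : HasDerivAt (fun t : ℝ => y + t • v) v 0 := by
        have h1 : HasDerivAt (fun t : ℝ => t • v) ((1:ℝ) • v) 0 :=
          (hasDerivAt_id (0:ℝ)).smul_const v
        rw [one_smul] at h1
        exact h1.const_add y
      have hGA : HasGradientAt f g y := hdiff.hasGradientAt
      have hval : (InnerProductSpace.toDual ℝ (EuclideanSpace ℝ (Fin n)) g) v = -‖g‖ := by
        rw [InnerProductSpace.toDual_apply_apply, hv_def, inner_neg_right,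
          real_inner_smul_right, real_inner_self_eq_norm_sq]
        field_simp
      have hcomp : HasDerivAt (fun t : ℝ => f (y + t • v)) (-‖g‖) 0 := by
        have hfd : HasFDerivAt f (InnerProductSpace.toDual ℝ (EuclideanSpace ℝ (Fin n)) g)
            ((fun t : ℝ => y + t • v) 0) := by
          simpa using hGA.hasFDerivAt
        have hc := hfd.comp_hasDerivAt 0 hline
        rw [hval] at hc
        exact hc
      have hslope : ∀ᶠ t in 𝓝[>] (0:ℝ), -σ ≤ slope (fun t : ℝ => f (y + t • v)) 0 t := by
        have hmem : Set.Ioo (0:ℝ) (2 * ρ - dist y xbar) ∈ 𝓝[>] (0:ℝ) :=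
          Ioo_mem_nhdsGT_of_mem ⟨le_rfl, by linarith⟩
        filter_upwards [hmem] with t ht
        have ht0 : 0 < t := ht.1
        have hdt : dist (y + t • v) y = t := by
          rw [dist_eq_norm]
          simp [norm_smul, hvnorm, abs_of_pos ht0]
        have hyt : y + t • v ∈ K := by
          have h1 : dist (y + t • v) xbar ≤ dist (y + t • v) y + dist y xbar :=
            dist_triangle _ _ _
          rw [hdt] at h1
          exact Metric.mem_closedBall.mpr (by linarith [ht.2])
        have h3 : f y + σ * dist y x₀ ≤ f (y + t • v) + σ * dist (y + t • v) x₀ := by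
          have h3' := hymin hyt
          simpa using h3'
        have h4 : dist (y + t • v) x₀ ≤ t + dist y x₀ := by
          have h5 : dist (y + t • v) x₀ ≤ dist (y + t • v) y + dist y x₀ := dist_triangle _ _ _
          rw [hdt] at h5
          exact h5
        have h6 : σ * dist (y + t • v) x₀ ≤ σ * (t + dist y x₀) :=
          mul_le_mul_of_nonneg_left h4 hσpos.le
        have h7 : -(σ * t) ≤ f (y + t • v) - f y := by linarith
        have h8 : slope (fun t : ℝ => f (y + t • v)) 0 t
            = (f (y + t • v) - f y) / t := by
          rw [slope_def_field]
          norm_num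
        rw [h8, le_div_iff₀ ht0]
        linarith
      have htend : Tendsto (slope (fun t : ℝ => f (y + t • v)) 0) (𝓝[>] (0:ℝ))
          (𝓝 (-‖g‖)) :=
        (hasDerivAt_iff_tendsto_slope.mp hcomp).mono_left
          (nhdsWithin_mono 0 fun t ht => ne_of_gt ht)
      have hge : -σ ≤ -‖g‖ := ge_of_tendsto htend hslope
      linarith
  -- y lies in the horn; Łojasiewicz inequality gives a contradiction
  set e : ℝ := Metric.infDist y S with he_def
  have he1 : d ≤ e + dist x₀ y := Metric.infDist_le_infDist_add_dist
  have hxy : dist x₀ y < d / 2 := by rw [dist_comm]; exact hyd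
  have he2 : d / 2 ≤ e := by linarith
  have hepos : 0 < e := by linarith
  have hd2e : d ≤ 2 * e := by linarith
  have hyδ : y ∈ Metric.closedBall xbar δ := (hsub hyK).2
  have hhorn : |f y - f xbar| ≤ w * e ^ r := by
    have h1 : 0 ≤ f y - f xbar := by linarith
    have h2 : f y - f xbar < ε * (L ^ r * d ^ r) := by linarith
    have h3 : d ^ r ≤ (2 * e) ^ r := pow_le_pow_left₀ hd0 hd2e r
    rw [mul_pow] at h3
    have h4 : ε * (L ^ r * d ^ r) ≤ (ε * (2 ^ r * L ^ r)) * e ^ r := by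
      have h4' := mul_le_mul_of_nonneg_left h3 (show (0:ℝ) ≤ ε * L ^ r by positivity)
      nlinarith [h4']
    have h5 : (ε * (2 ^ r * L ^ r)) * e ^ r ≤ w * e ^ r :=
      mul_le_mul_of_nonneg_right
        (le_of_lt (lt_of_lt_of_le hkey (min_le_right c w))) (by positivity)
    rw [abs_of_nonneg h1]; linarith
  have hloj := hgrad y hyδ hhorn
  have h6 : d ^ (r - 1) ≤ (2 * e) ^ (r - 1) := pow_le_pow_left₀ hd0 hd2e _
  have h7 : (2:ℝ) ^ r = 2 * 2 ^ (r - 1) := by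
    calc (2:ℝ) ^ r = 2 ^ (r - 1 + 1) := by rw [show r - 1 + 1 = r by omega]
      _ = 2 * 2 ^ (r - 1) := by rw [pow_succ]; ring
  have h8 : σ ≤ (ε * (2 ^ r * L ^ r)) * e ^ (r - 1) := by
    rw [hσ_def, h7]
    rw [mul_pow] at h6
    have h8' := mul_le_mul_of_nonneg_left h6 (show (0:ℝ) ≤ 2 * ε * L ^ r by positivity)
    nlinarith [h8']
  have h9 : (ε * (2 ^ r * L ^ r)) * e ^ (r - 1) < c * e ^ (r - 1) :=
    mul_lt_mul_of_pos_right (lt_of_lt_of_le hkey (min_le_left c w)) (by positivity)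
  linarith
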